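/- Assume V⁺ admits a monomial parametrization with exponent matrix A (data p, A, K, ψ) and that the cone generator matrix E has no zero row. Let F be any predicate on ℝ^{n−s} (for instance a logical combination of polynomial inequalities in the total concentrations). Then there exist k ∈ K and c ∈ im₊(Z) such that F(c) holds and the equation Z(ψ(k)⋆ξ^A) = c has at least two distinct solutions ξ₁ ≠ ξ₂ ∈ ℝ_{>0}^{n−p}, if and only if there exist a ∈ ℝ_{>0}^n and ξ ∈ ℝ_{>0}^{n−p} with ξ ≠ 𝟙 such that Z(a⋆ξ^A − a) = 0 and F(Za) holds. -/
import Mathlib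


open Matrix

noncomputable section

/-- The monomial map φ: `phi Y x j = ∏ i, x i ^ Y i j`. -/
def phi {n r : ℕ} (Y : Matrix (Fin n) (Fin r) ℕ) (x : Fin n → ℝ) : Fin r → ℝ :=
  fun j => ∏ i, x i ^ Y i j

/-- The positive steady state variety V⁺. -/
def Vplus {n r : ℕ} (Y : Matrix (Fin n) (Fin r) ℕ) (S : Matrix (Fin n) (Fin r) ℝ) :
    Set ((Fin r → ℝ) × (Fin n → ℝ)) :=
  {p | (∀ j, 0 < p.1 j) ∧ (∀ i, 0 < p.2 i) ∧
    S.mulVec (fun j => p.1 j * phi Y p.2 j) = 0}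

/-- `E` is a cone generator matrix for `S`:
`E` is nonnegative and `ker S ∩ ℝ_{≥0}^r = {Eλ : λ ≥ 0}`. -/
def IsConeGenMatrix {n r d : ℕ} (S : Matrix (Fin n) (Fin r) ℝ)
    (E : Matrix (Fin r) (Fin d) ℝ) : Prop :=
  (∀ j l, 0 ≤ E j l) ∧
  {v : Fin r → ℝ | S.mulVec v = 0 ∧ ∀ j, 0 ≤ v j} =
    {v : Fin r → ℝ | ∃ lam : Fin d → ℝ, (∀ l, 0 ≤ lam l) ∧ v = E.mulVec lam}

/-- The coefficient cone Λ(E). -/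
def Lambda {r d : ℕ} (E : Matrix (Fin r) (Fin d) ℝ) : Set (Fin d → ℝ) :=
  {lam | (∀ l, 0 ≤ lam l) ∧ ∀ j, 0 < E.mulVec lam j}

/-- `ξ^B`: for a rational `q × m` matrix `B`, `(ξ^B) j = ∏ i, ξ i ^ (B i j)` (real powers). -/
def vecPow {q m : ℕ} (ξ : Fin q → ℝ) (B : Matrix (Fin q) (Fin m) ℚ) : Fin m → ℝ :=
  fun j => ∏ i, ξ i ^ ((B i j : ℝ))

/-- V⁺ admits a monomial parametrization with exponent matrix `A` (data `p`, `A`, `K`, `ψ`). -/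
def IsMonomialParamExp {n r : ℕ} (Y : Matrix (Fin n) (Fin r) ℕ)
    (S : Matrix (Fin n) (Fin r) ℝ) (p : ℕ) (A : Matrix (Fin (n - p)) (Fin n) ℚ)
    (K : Set (Fin r → ℝ)) (ψ : (Fin r → ℝ) → (Fin n → ℝ)) : Prop :=
  p < n ∧ A.rank = n - p ∧ (∀ k ∈ K, ∀ j, 0 < k j) ∧ (∀ k ∈ K, ∀ i, 0 < ψ k i) ∧
  ∀ k x, (∀ j : Fin r, 0 < k j) → (∀ i : Fin n, 0 < x i) →
    ((k, x) ∈ Vplus Y S ↔ k ∈ K ∧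
      ∃ ξ : Fin (n - p) → ℝ, (∀ l, 0 < ξ l) ∧ x = fun i => ψ k i * vecPow ξ A i)

/-- `Z` is a conservation matrix for `S` (with `s = rank S`):
its rows form a basis of the left kernel of `S`. -/
def IsConservationMatrix {n r : ℕ} (S : Matrix (Fin n) (Fin r) ℝ) (s : ℕ)
    (Z : Matrix (Fin (n - s)) (Fin n) ℝ) : Prop :=
  S.rank = s ∧ s < n ∧ LinearIndependent ℝ (fun i => Z i) ∧
    Submodule.span ℝ (Set.range (fun i => Z i)) = LinearMap.ker S.vecMulLinear

/-- `im₊(Z) = {Zx : x ≥ 0}`. -/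
def imPos {m n : ℕ} (Z : Matrix (Fin m) (Fin n) ℝ) : Set (Fin m → ℝ) :=
  {c | ∃ x : Fin n → ℝ, (∀ i, 0 ≤ x i) ∧ c = Z.mulVec x}

/-- The real row space of a rational matrix. -/
def rowSpace {q m : ℕ} (A : Matrix (Fin q) (Fin m) ℚ) : Submodule ℝ (Fin m → ℝ) :=
  Submodule.span ℝ (Set.range (fun l => fun i => ((A l i : ℝ))))

/-- The column space (image) of `S`. -/
def colSpace {n r : ℕ} (S : Matrix (Fin n) (Fin r) ℝ) : Submodule ℝ (Fin n → ℝ) :=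
  LinearMap.range S.mulVecLin

/-- Componentwise sign of a vector. -/
def signVec {m : ℕ} (v : Fin m → ℝ) : Fin m → ℝ := fun i => Real.sign (v i)


lemma vecPow_pos {q m : ℕ} {ξ : Fin q → ℝ} (hξ : ∀ l, 0 < ξ l)
    (B : Matrix (Fin q) (Fin m) ℚ) (j : Fin m) : 0 < vecPow ξ B j :=
  Finset.prod_pos fun i _ => Real.rpow_pos_of_pos (hξ i) _

lemma vecPow_mul {q m : ℕ} {ξ η : Fin q → ℝ} (hξ : ∀ l, 0 ≤ ξ l) (hη : ∀ l, 0 ≤ η l)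
    (B : Matrix (Fin q) (Fin m) ℚ) :
    vecPow (fun l => ξ l * η l) B = fun j => vecPow ξ B j * vecPow η B j := by
  funext j
  unfold vecPow
  rw [← Finset.prod_mul_distrib]
  exact Finset.prod_congr rfl fun i _ => Real.mul_rpow (hξ i) (hη i)

lemma phi_pos {n r : ℕ} (Y : Matrix (Fin n) (Fin r) ℕ) {x : Fin n → ℝ}
    (hx : ∀ i, 0 < x i) (j : Fin r) : 0 < phi Y x j :=
  Finset.prod_pos fun i _ => pow_pos (hx i) _

lemma mulVec_sub_vec {m n : ℕ} (Z : Matrix (Fin m) (Fin n) ℝ) (u v : Fin n → ℝ) :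
    Z.mulVec (fun i => u i - v i) = Z.mulVec u - Z.mulVec v := by
  have : (fun i => u i - v i) = u - v := rfl
  rw [this, Matrix.mulVec_sub]

/-- semi-algebraic conditions F on the total concentrations can be added
to the rate-constant-free multistationarity criterion. -/
theorem multistationarity_with_constraints {n r d s p : ℕ} (hn : 1 ≤ n) (hr : 1 ≤ r)
    (Y : Matrix (Fin n) (Fin r) ℕ) (S : Matrix (Fin n) (Fin r) ℝ)
    (A : Matrix (Fin (n - p)) (Fin n) ℚ) (K : Set (Fin r → ℝ))
    (ψ : (Fin r → ℝ) → (Fin n → ℝ)) (hparam : IsMonomialParamExp Y S p A K ψ)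
    (E : Matrix (Fin r) (Fin d) ℝ) (hE : IsConeGenMatrix S E)
    (hrow : ∀ j, ∃ l, E j l ≠ 0)
    (Z : Matrix (Fin (n - s)) (Fin n) ℝ) (hZ : IsConservationMatrix S s Z)
    (F : (Fin (n - s) → ℝ) → Prop) :
    (∃ k ∈ K, ∃ c ∈ imPos Z, F c ∧
        ∃ ξ₁ ξ₂ : Fin (n - p) → ℝ, (∀ l, 0 < ξ₁ l) ∧ (∀ l, 0 < ξ₂ l) ∧ ξ₁ ≠ ξ₂ ∧
          Z.mulVec (fun i => ψ k i * vecPow ξ₁ A i) = c ∧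
          Z.mulVec (fun i => ψ k i * vecPow ξ₂ A i) = c) ↔
      (∃ a : Fin n → ℝ, (∀ i, 0 < a i) ∧ ∃ ξ : Fin (n - p) → ℝ, (∀ l, 0 < ξ l) ∧
        ξ ≠ (fun _ => 1) ∧ Z.mulVec (fun i => a i * vecPow ξ A i - a i) = 0 ∧
        F (Z.mulVec a)) := by
  obtain ⟨hp, hA, hKpos, hψpos, hiff⟩ := hparam
  constructor
  · rintro ⟨k, hk, c, hc, hF, ξ₁, ξ₂, h1, h2, hne, hZ1, hZ2⟩
    refine ⟨fun i => ψ k i * vecPow ξ₂ A i,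
      fun i => mul_pos (hψpos k hk i) (vecPow_pos h2 A i),
      fun l => ξ₁ l * (ξ₂ l)⁻¹,
      fun l => mul_pos (h1 l) (inv_pos.mpr (h2 l)), ?_, ?_, ?_⟩
    · intro h
      apply hne
      funext l
      have := congrFun h l
      field_simp at this
      rw [div_eq_one_iff_eq (ne_of_gt (h2 l))] at this
      exact this
    · have key : (fun i => (ψ k i * vecPow ξ₂ A i) * vecPow (fun l => ξ₁ l * (ξ₂ l)⁻¹) A i)
          = fun i => ψ k i * vecPow ξ₁ A i := by
        funext i
        have h3 : (fun l => ξ₂ l * (ξ₁ l * (ξ₂ l)⁻¹)) = ξ₁ := by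
          funext l
          rw [mul_comm (ξ₁ l) ((ξ₂ l)⁻¹), ← mul_assoc, mul_inv_cancel₀ (ne_of_gt (h2 l)), one_mul]
        have := congrFun (vecPow_mul (fun l => le_of_lt (h2 l))
          (fun l => le_of_lt (mul_pos (h1 l) (inv_pos.mpr (h2 l)))) A) i
        rw [h3] at this
        rw [this]
        ring
      rw [mulVec_sub_vec]
      rw [show (fun i => ψ k i * vecPow ξ₂ A i * vecPow (fun l => ξ₁ l * (ξ₂ l)⁻¹) A i) = _ from key]
      rw [hZ1, hZ2]
      simp
    · rw [hZ2]; exact hF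
  · rintro ⟨a, ha, ξ, hξ, hξne, hZ0, hF⟩
    -- construct k
    set v : Fin r → ℝ := E.mulVec (fun _ => 1) with hv
    have hvmem : v ∈ {v : Fin r → ℝ | ∃ lam : Fin d → ℝ, (∀ l, 0 ≤ lam l) ∧ v = E.mulVec lam} :=
      ⟨fun _ => 1, fun _ => zero_le_one, rfl⟩
    rw [← hE.2] at hvmem
    obtain ⟨hSv, hvnn⟩ := hvmem
    have hvpos : ∀ j, 0 < v j := by
      intro j
      obtain ⟨l, hl⟩ := hrow j
      have : 0 < ∑ l, E j l * 1 := by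
        apply Finset.sum_pos' (fun i _ => mul_nonneg (hE.1 j i) zero_le_one)
        exact ⟨l, Finset.mem_univ l, by
          simpa using lt_of_le_of_ne (hE.1 j l) (Ne.symm hl)⟩
      simpa [hv, Matrix.mulVec, dotProduct] using this
    set k : Fin r → ℝ := fun j => v j / phi Y a j with hkdef
    have hkpos : ∀ j, 0 < k j := fun j => div_pos (hvpos j) (phi_pos Y ha j)
    have hkphi : (fun j => k j * phi Y a j) = v := by
      funext j
      exact div_mul_cancel₀ _ (ne_of_gt (phi_pos Y ha j))
    have hmem : (k, a) ∈ Vplus Y S := ⟨hkpos, ha, by rw [hkphi]; exact hSv⟩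
    obtain ⟨hkK, ξ₀, hξ₀, haeq⟩ := (hiff k a hkpos ha).mp hmem
    refine ⟨k, hkK, Z.mulVec a, ⟨a, fun i => le_of_lt (ha i), rfl⟩, hF,
      ξ₀, (fun l => ξ₀ l * ξ l), hξ₀, fun l => mul_pos (hξ₀ l) (hξ l), ?_, ?_, ?_⟩
    · intro h
      apply hξne
      funext l
      have hthis : ξ₀ l = ξ₀ l * ξ l := congrFun h l
      have h' : ξ₀ l * 1 = ξ₀ l * ξ l := by rw [mul_one]; exact hthis
      exact (mul_left_cancel₀ (ne_of_gt (hξ₀ l)) h').symm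
    · rw [← haeq]
    · have key : (fun i => ψ k i * vecPow (fun l => ξ₀ l * ξ l) A i)
          = fun i => a i * vecPow ξ A i := by
        funext i
        have := congrFun (vecPow_mul (fun l => le_of_lt (hξ₀ l))
          (fun l => le_of_lt (hξ l)) A) i
        rw [this, haeq]
        ring
      rw [key]
      have := hZ0
      rw [mulVec_sub_vec, sub_eq_zero] at this
      exact this
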